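/- Let (E, J, M) be a double factorization system on a category C, and let G = (G, ε, δ) be a comonad on C whose underlying functor preserves all small limits, trivial fibrations (G(M) ⊆ M) and bifibrant morphisms (G(J) ⊆ J); let (E_G, J_G, M_G) be the left-induced dfs on the category of G-coalgebras C_G given by preimages under the forgetful functor U : C_G → C, and let R denote the cofree coalgebra functor. Then U maps (J_G·E_G)-local coalgebras to (J·E)-local objects and R maps (J·E)-local objects to (J_G·E_G)-local coalgebras if and only if G preserves (J·E)-local objects, i.e. G(C_{J·E}) ⊆ C_{J·E}. -/

import Mathlib

open CategoryTheory CategoryTheory.Limits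

universe v u v₂ u₂

namespace DFS

variable {C : Type u} [Category.{v} C]

/-- `f` is (left) orthogonal to `g`: every commutative square from `f` to `g`
admits a unique diagonal filler. -/
def Orth {A B X Y : C} (f : A ⟶ B) (g : X ⟶ Y) : Prop :=
  ∀ (u : A ⟶ X) (v : B ⟶ Y), u ≫ g = f ≫ v → ∃! h : B ⟶ X, f ≫ h = u ∧ h ≫ g = v

/-- Mutual orthogonality of two classes of morphisms. -/
def ClassOrth (L R : MorphismProperty C) : Prop :=
  ∀ ⦃A B X Y : C⦄ (f : A ⟶ B) (g : X ⟶ Y), L f → R g → Orth f g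

/-- The class `R·L` of composites `e ≫ m` with `e ∈ L` and `m ∈ R`. -/
def Comp (R L : MorphismProperty C) : MorphismProperty C :=
  fun X Y f => ∃ (Z : C) (e : X ⟶ Z) (m : Z ⟶ Y), L e ∧ R m ∧ e ≫ m = f

/-- An object `X` is `L`-local if precomposition with every member of `L` is a
bijection of hom-sets into `X`. -/
def IsLocal (L : MorphismProperty C) (X : C) : Prop :=
  ∀ ⦃A B : C⦄ (m : A ⟶ B), L m → Function.Bijective (fun g : B ⟶ X => m ≫ g)

/-- An object `X` is `L`-separating if precomposition with every member of `L` is an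
injection of hom-sets into `X`. -/
def IsSeparating (L : MorphismProperty C) (X : C) : Prop :=
  ∀ ⦃A B : C⦄ (m : A ⟶ B), L m → Function.Injective (fun g : B ⟶ X => m ≫ g)

/-- A double (orthogonal) factorization system. -/
structure IsDFS (E J M : MorphismProperty C) : Prop where
  postcomp_iso_E : ∀ ⦃A B B' : C⦄ (e : A ⟶ B) (i : B ⟶ B'), IsIso i → E e → E (e ≫ i)
  comp_iso_J : ∀ ⦃A' A B B' : C⦄ (i : A' ⟶ A) (j : A ⟶ B) (i' : B ⟶ B'),
      IsIso i → IsIso i' → J j → J (i ≫ j ≫ i')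
  precomp_iso_M : ∀ ⦃A' A B : C⦄ (i : A' ⟶ A) (m : A ⟶ B), IsIso i → M m → M (i ≫ m)
  fac : ∀ ⦃X Y : C⦄ (f : X ⟶ Y), ∃ (A B : C) (e : X ⟶ A) (j : A ⟶ B) (m : B ⟶ Y),
      E e ∧ J j ∧ M m ∧ e ≫ j ≫ m = f
  lift : ∀ ⦃A B B'' D D' F' : C⦄ (e : A ⟶ B) (j : B ⟶ B'') (j' : D ⟶ D') (m : D' ⟶ F')
      (u : A ⟶ D) (v : B'' ⟶ F'), E e → J j → J j' → M m →
      e ≫ j ≫ v = u ≫ j' ≫ m →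
      ∃! st : (B ⟶ D) × (B'' ⟶ D'),
        e ≫ st.1 = u ∧ st.1 ≫ j' = j ≫ st.2 ∧ st.2 ≫ m = v

/-- An (orthogonal) factorization system. -/
structure IsFS (L R : MorphismProperty C) : Prop where
  fac : ∀ ⦃X Y : C⦄ (f : X ⟶ Y), ∃ (Z : C) (e : X ⟶ Z) (m : Z ⟶ Y), L e ∧ R m ∧ e ≫ m = f
  left_iff : ∀ ⦃A B : C⦄ (f : A ⟶ B), L f ↔ ∀ ⦃X Y : C⦄ (g : X ⟶ Y), R g → Orth f g
  right_iff : ∀ ⦃X Y : C⦄ (g : X ⟶ Y), R g ↔ ∀ ⦃A B : C⦄ (f : A ⟶ B), L f → Orth f g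

/-- Stability of a class of morphisms under pullback. -/
def StableUnderPB (P : MorphismProperty C) : Prop :=
  ∀ ⦃A B A' B' : C⦄ (f : A ⟶ B) (g : B' ⟶ B) (f' : A' ⟶ B') (h : A' ⟶ A),
    IsPullback h f' f g → P f → P f'

/-- A left Quillen functor between categories equipped with dfs's: it maps
trivial cofibrations to trivial cofibrations and cofibrations to cofibrations. -/
def LeftQuillen {D : Type u₂} [Category.{v₂} D]
    (EC JC : MorphismProperty C) (ED JD : MorphismProperty D) (F : C ⥤ D) : Prop :=
  (∀ ⦃A B : C⦄ (f : A ⟶ B), EC f → ED (F.map f)) ∧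
  (∀ ⦃A B : C⦄ (f : A ⟶ B), Comp JC EC f → Comp JD ED (F.map f))

end DFS

namespace DFS

/-- The preimage of a class of morphisms under the forgetful functor from
Eilenberg–Moore coalgebras. -/
def coalgPre {C : Type u} [Category.{v} C] (G : Comonad C) (P : MorphismProperty C) :
    MorphismProperty G.Coalgebra :=
  fun _ _ f => P f.f

end DFS


namespace DFS

section Aux

variable {C : Type u} [Category.{v} C]

lemma isLocal_terminal [HasTerminal C] (L : MorphismProperty C) :
    IsLocal L (⊤_ C) := by
  intro A B m _
  constructor
  · intro g₁ g₂ _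
    apply Limits.terminal.hom_ext
  · intro u
    exact ⟨Limits.terminal.from B, Limits.terminal.hom_ext _ _⟩

/-- Left-induced factorization datum for a coalgebra morphism. -/
lemma coalg_fac {E J M : MorphismProperty C} (h : IsDFS E J M) {G : Comonad C}
    (hM : ∀ ⦃A B : C⦄ (f : A ⟶ B), M f → M (G.toFunctor.map f))
    (hJ : ∀ ⦃A B : C⦄ (f : A ⟶ B), J f → J (G.toFunctor.map f))
    {X Y : G.Coalgebra} (g : X ⟶ Y) :
    ∃ (W₁ W₂ : G.Coalgebra) (eb : X ⟶ W₁) (jb : W₁ ⟶ W₂) (m : W₂.A ⟶ Y.A),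
      E eb.f ∧ J jb.f ∧ M m := by
  obtain ⟨A1, A2, e, j, m, hE, hJ', hM', hcomp⟩ := h.fac g.f
  have hgh : X.a ≫ G.toFunctor.map g.f = g.f ≫ Y.a := g.h
  have εnat : ∀ {P Q : C} (f : P ⟶ Q),
      G.toFunctor.map f ≫ G.ε.app Q = G.ε.app P ≫ f := fun f =>
    G.ε.naturality f
  have δnat : ∀ {P Q : C} (f : P ⟶ Q),
      G.toFunctor.map f ≫ G.δ.app Q
        = G.δ.app P ≫ G.toFunctor.map (G.toFunctor.map f) := fun f =>
    G.δ.naturality f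
  have hc1 : e ≫ j ≫ (m ≫ Y.a)
      = (X.a ≫ G.toFunctor.map e) ≫ G.toFunctor.map j ≫ G.toFunctor.map m := by
    calc e ≫ j ≫ (m ≫ Y.a) = (e ≫ j ≫ m) ≫ Y.a := by simp
    _ = g.f ≫ Y.a := by rw [hcomp]
    _ = X.a ≫ G.toFunctor.map g.f := hgh.symm
    _ = X.a ≫ G.toFunctor.map (e ≫ j ≫ m) := by rw [hcomp]
    _ = (X.a ≫ G.toFunctor.map e) ≫ G.toFunctor.map j ≫ G.toFunctor.map m := by
        simp [Functor.map_comp]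
  obtain ⟨⟨w₁, w₂⟩, ⟨hw1, hw12, hw2⟩, _⟩ :=
    h.lift e j (G.toFunctor.map j) (G.toFunctor.map m) (X.a ≫ G.toFunctor.map e)
      (m ≫ Y.a) hE hJ' (hJ j hJ') (hM m hM') hc1
  dsimp only at hw1 hw12 hw2
  -- counit laws
  obtain ⟨st0, _, huniq0⟩ := h.lift e j j m e m hE hJ' hJ' hM' rfl
  have e1 : (𝟙 A1, 𝟙 A2) = st0 := huniq0 _ ⟨by simp, by simp, by simp⟩
  have e2 : (w₁ ≫ G.ε.app A1, w₂ ≫ G.ε.app A2) = st0 := by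
    refine huniq0 _ ⟨?_, ?_, ?_⟩
    · dsimp only
      rw [← Category.assoc, hw1, Category.assoc, εnat e, ← Category.assoc]
      simpa using congrArg (fun t => t ≫ e) X.counit
    · dsimp only
      rw [Category.assoc, ← εnat j, ← Category.assoc, hw12]
      simp
    · dsimp only
      rw [Category.assoc, ← εnat m, ← Category.assoc, hw2, Category.assoc,
        Y.counit]
      simp
  have ecu : (w₁ ≫ G.ε.app A1, w₂ ≫ G.ε.app A2) = ((𝟙 A1 : A1 ⟶ A1), (𝟙 A2 : A2 ⟶ A2)) :=
    e2.trans e1.symm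
  have hcu1 : w₁ ≫ G.ε.app A1 = 𝟙 A1 := congrArg Prod.fst ecu
  have hcu2 : w₂ ≫ G.ε.app A2 = 𝟙 A2 := congrArg Prod.snd ecu
  -- coassociativity laws
  have hc3 : e ≫ j ≫ (m ≫ Y.a ≫ G.δ.app Y.A)
      = (X.a ≫ G.δ.app X.A ≫ G.toFunctor.map (G.toFunctor.map e))
        ≫ G.toFunctor.map (G.toFunctor.map j) ≫ G.toFunctor.map (G.toFunctor.map m) := by
    calc e ≫ j ≫ (m ≫ Y.a ≫ G.δ.app Y.A) = (e ≫ j ≫ m) ≫ Y.a ≫ G.δ.app Y.A := by simp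
    _ = g.f ≫ Y.a ≫ G.δ.app Y.A := by rw [hcomp]
    _ = X.a ≫ G.δ.app X.A ≫ G.toFunctor.map (G.toFunctor.map g.f) := by
        rw [← Category.assoc, ← hgh, Category.assoc, δnat g.f]
    _ = _ := by rw [← hcomp]; simp [Functor.map_comp]
  obtain ⟨st3, _, huniq3⟩ :=
    h.lift e j (G.toFunctor.map (G.toFunctor.map j)) (G.toFunctor.map (G.toFunctor.map m))
      (X.a ≫ G.δ.app X.A ≫ G.toFunctor.map (G.toFunctor.map e))
      (m ≫ Y.a ≫ G.δ.app Y.A) hE hJ' (hJ _ (hJ j hJ')) (hM _ (hM m hM')) hc3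
  have c1 : (w₁ ≫ G.δ.app A1, w₂ ≫ G.δ.app A2) = st3 := by
    refine huniq3 _ ⟨?_, ?_, ?_⟩
    · dsimp only
      rw [← Category.assoc, hw1, Category.assoc, δnat e]
    · dsimp only
      rw [Category.assoc, ← δnat j, ← Category.assoc, hw12]
      simp
    · dsimp only
      rw [Category.assoc, ← δnat m, ← Category.assoc, hw2]
      simp
  have c2 : (w₁ ≫ G.toFunctor.map w₁, w₂ ≫ G.toFunctor.map w₂) = st3 := by
    refine huniq3 _ ⟨?_, ?_, ?_⟩
    · dsimp only
      rw [← Category.assoc, hw1, Category.assoc, ← Functor.map_comp, hw1,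
        Functor.map_comp, ← Category.assoc, ← Category.assoc, X.coassoc]
    · dsimp only
      rw [Category.assoc, ← Functor.map_comp, hw12, Functor.map_comp,
        ← Category.assoc, hw12]
      simp
    · dsimp only
      rw [Category.assoc, ← Functor.map_comp, hw2, Functor.map_comp,
        ← Category.assoc, hw2, Category.assoc, ← Y.coassoc]
  have eco : (w₁ ≫ G.δ.app A1, w₂ ≫ G.δ.app A2)
      = (w₁ ≫ G.toFunctor.map w₁, w₂ ≫ G.toFunctor.map w₂) := c1.trans c2.symm
  have hco1 : w₁ ≫ G.δ.app A1 = w₁ ≫ G.toFunctor.map w₁ := congrArg Prod.fst eco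
  have hco2 : w₂ ≫ G.δ.app A2 = w₂ ≫ G.toFunctor.map w₂ := congrArg Prod.snd eco
  refine ⟨⟨A1, w₁, hcu1, hco1⟩, ⟨A2, w₂, hcu2, hco2⟩,
    ⟨e, hw1.symm⟩, ⟨j, hw12⟩, m, hE, hJ', hM'⟩

/-- Cofree coalgebras on local objects are local (unconditional). -/
lemma cofree_local {E J : MorphismProperty C} {G : Comonad C} (A : C)
    (hA : IsLocal (Comp J E) A) :
    IsLocal (Comp (coalgPre G J) (coalgPre G E)) (G.cofree.obj A) := by
  rintro X Y f ⟨Z, e, m, he, hm, hcomp⟩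
  have hf : Comp J E f.f := ⟨Z.A, e.f, m.f, he, hm, by rw [← hcomp]; rfl⟩
  have key : (fun g : Y ⟶ G.cofree.obj A => f ≫ g)
      = ⇑(G.adj.homEquiv X A) ∘ (fun g => f.f ≫ g) ∘ ⇑(G.adj.homEquiv Y A).symm := by
    funext g
    show f ≫ g = (G.adj.homEquiv X A) (f.f ≫ (G.adj.homEquiv Y A).symm g)
    have := G.adj.homEquiv_naturality_left f ((G.adj.homEquiv Y A).symm g)
    rw [show G.forget.map f = f.f from rfl] at this
    rw [Equiv.apply_symm_apply] at this
    exact this.symm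
  rw [key]
  exact ((G.adj.homEquiv X A).bijective.comp (hA f.f hf)).comp
    (G.adj.homEquiv Y A).symm.bijective

end Aux

end DFS

/-- Let `(E, J, M)` be a dfs on a (bicomplete) category `C`, `G` a
comonad whose functor preserves all small limits, trivial fibrations and bifibrant
morphisms, and let `(E_G, J_G, M_G)` be the left-induced dfs on `G`-coalgebras.
Then [the forgetful functor maps `(J_G·E_G)`-local coalgebras to `(J·E)`-local objects
and the cofree functor maps `(J·E)`-local objects to `(J_G·E_G)`-local coalgebras]
iff `G` preserves `(J·E)`-local objects. -/
theorem statement10 {C : Type u} [Category.{v} C] [HasLimits C] [HasColimits C]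
    (E J M : MorphismProperty C) (h : DFS.IsDFS E J M) (G : Comonad C)
    [PreservesLimits G.toFunctor]
    (hM : ∀ ⦃A B : C⦄ (f : A ⟶ B), M f → M (G.toFunctor.map f))
    (hJ : ∀ ⦃A B : C⦄ (f : A ⟶ B), J f → J (G.toFunctor.map f)) :
    ((∀ X : G.Coalgebra,
        DFS.IsLocal (DFS.Comp (DFS.coalgPre G J) (DFS.coalgPre G E)) X →
          DFS.IsLocal (DFS.Comp J E) X.A) ∧
     (∀ A : C, DFS.IsLocal (DFS.Comp J E) A →
        DFS.IsLocal (DFS.Comp (DFS.coalgPre G J) (DFS.coalgPre G E)) (G.cofree.obj A)))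
    ↔ (∀ A : C, DFS.IsLocal (DFS.Comp J E) A →
        DFS.IsLocal (DFS.Comp J E) (G.toFunctor.obj A)) := by

  constructor
  · rintro ⟨h1, h2⟩ A hA
    exact h1 (G.cofree.obj A) (h2 A hA)
  · intro hG
    refine ⟨?_, fun A hA => DFS.cofree_local A hA⟩
    intro X hX
    -- the coalgebra map to the cofree coalgebra on the terminal object
    set t : X ⟶ G.cofree.obj (⊤_ C) :=
      (G.adj.homEquiv X (⊤_ C)) (Limits.terminal.from X.A) with ht
    obtain ⟨W1, W2, eb, jb, m, hEe, hJj, hMm⟩ := DFS.coalg_fac h hM hJ t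
    have hGT : DFS.IsLocal (DFS.Comp J E) ((G.cofree.obj (⊤_ C)).A) :=
      hG (⊤_ C) (DFS.isLocal_terminal _)
    obtain ⟨r, hr⟩ := (hX (eb ≫ jb) ⟨W1, eb, jb, hEe, hJj, rfl⟩).2 (𝟙 X)
    have hir : (eb.f ≫ jb.f) ≫ r.f = 𝟙 X.A := by
      have := congrArg Comonad.Coalgebra.Hom.f hr
      simpa using this
    rintro A' B' fm ⟨Z, e, j, he, hj, hcomp⟩
    subst hcomp
    have hEJ : DFS.Comp J E (e ≫ j) := ⟨Z, e, j, he, hj, rfl⟩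
    have hbij := hGT (e ≫ j) hEJ
    constructor
    · intro h₁ h₂ hh
      dsimp only at hh
      have hv : h₁ ≫ (eb.f ≫ jb.f) ≫ m = h₂ ≫ (eb.f ≫ jb.f) ≫ m := by
        apply hbij.1
        show (e ≫ j) ≫ h₁ ≫ (eb.f ≫ jb.f) ≫ m = (e ≫ j) ≫ h₂ ≫ (eb.f ≫ jb.f) ≫ m
        rw [← Category.assoc, ← Category.assoc, hh]
        simp
      obtain ⟨st, _, huniq⟩ :=
        h.lift e j jb.f m ((e ≫ j) ≫ h₁ ≫ eb.f) (h₁ ≫ (eb.f ≫ jb.f) ≫ m)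
          he hj hJj hMm (by simp)
      have u1 : (j ≫ h₁ ≫ eb.f, h₁ ≫ eb.f ≫ jb.f) = st := by
        refine huniq _ ⟨by simp, by simp, by simp⟩
      have u2 : (j ≫ h₂ ≫ eb.f, h₂ ≫ eb.f ≫ jb.f) = st := by
        refine huniq _ ⟨?_, by simp, ?_⟩
        · dsimp only
          rw [← Category.assoc, ← Category.assoc, ← hh]
          simp
        · dsimp only
          have := hv.symm
          simpa using this
      have hii : h₁ ≫ eb.f ≫ jb.f = h₂ ≫ eb.f ≫ jb.f :=
        congrArg Prod.snd (u1.trans u2.symm)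
      calc h₁ = h₁ ≫ (eb.f ≫ jb.f) ≫ r.f := by rw [hir]; simp
      _ = (h₁ ≫ eb.f ≫ jb.f) ≫ r.f := by simp
      _ = (h₂ ≫ eb.f ≫ jb.f) ≫ r.f := by rw [hii]
      _ = h₂ := by rw [Category.assoc, Category.assoc, ← Category.assoc (eb.f), hir]; simp
    · intro u
      obtain ⟨v, hvv⟩ := hbij.2 (u ≫ (eb.f ≫ jb.f) ≫ m)
      have hvv' : (e ≫ j) ≫ v = u ≫ (eb.f ≫ jb.f) ≫ m := hvv
      obtain ⟨⟨s, tt⟩, ⟨hs, hstt, htm⟩, _⟩ :=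
        h.lift e j jb.f m (u ≫ eb.f) v he hj hJj hMm
          (by rw [← Category.assoc, hvv']; simp)
      dsimp only at hs hstt htm
      refine ⟨tt ≫ r.f, ?_⟩
      show (e ≫ j) ≫ tt ≫ r.f = u
      calc (e ≫ j) ≫ tt ≫ r.f = e ≫ (j ≫ tt) ≫ r.f := by simp
      _ = e ≫ (s ≫ jb.f) ≫ r.f := by rw [hstt]
      _ = (e ≫ s) ≫ jb.f ≫ r.f := by simp
      _ = (u ≫ eb.f) ≫ jb.f ≫ r.f := by rw [hs]
      _ = u ≫ (eb.f ≫ jb.f) ≫ r.f := by simp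
      _ = u := by rw [hir]; simp
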